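/- For distinct primes p and q and n = 6, the polynomial f(X) = q^3 + p^2 q^3 X + p^2 q^3 X^2 + p^2 q^3 X^3 + p^2 q^3 X^4 + p^2 q^3 X^5 + p^2 X^6 is irreducible over Q. -/

import Mathlib

set_option maxRecDepth 8000
open Polynomial

private lemma pow_cancel {q x : ℤ} (hq : q ≠ 0) {k : ℕ} (h : q^(k+1) ∣ q * x) : q^k ∣ x := by
  obtain ⟨c, hc⟩ := h
  exact ⟨c, mul_left_cancel₀ hq (by rw [hc]; ring)⟩

private lemma dvd_of_dvd_mul_unit {q x v : ℤ} (hv : v = 1 ∨ v = -1) {k : ℕ} (h : q^k ∣ x * v) :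
    q^k ∣ x := by
  rcases hv with rfl | rfl
  · simpa using h
  · rw [mul_neg_one] at h; exact (dvd_neg).mp h

noncomputable def FF (p q : ℤ) : ℤ[X] :=
  C (q^3) + C (p^2*q^3) * X + C (p^2*q^3) * X^2 + C (p^2*q^3) * X^3 +
  C (p^2*q^3) * X^4 + C (p^2*q^3) * X^5 + C (p^2) * X^6

private lemma FF_coeff_zero (p q : ℤ) : (FF p q).coeff 0 = q^3 := by
  simp only [FF, coeff_add, coeff_C_mul, coeff_X_pow, coeff_C, coeff_X]; norm_num

private lemma FF_coeff_six (p q : ℤ) : (FF p q).coeff 6 = p^2 := by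
  simp only [FF, coeff_add, coeff_C_mul, coeff_X_pow, coeff_C, coeff_X]; norm_num

private lemma FF_coeff_mid (p q : ℤ) (k : ℕ) (h1 : 1 ≤ k) (h5 : k ≤ 5) :
    (FF p q).coeff k = p^2*q^3 := by
  interval_cases k <;>
    (simp only [FF, coeff_add, coeff_C_mul, coeff_X_pow, coeff_C, coeff_X]; norm_num)

private lemma FF_natDegree (p q : ℤ) (hp : p ≠ 0) : (FF p q).natDegree = 6 := by
  unfold FF; compute_degree!

private lemma FF_ne_zero (p q : ℤ) (hp : p ≠ 0) : FF p q ≠ 0 := fun h => by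
  have := FF_coeff_six p q
  rw [h] at this; simp at this
  exact hp (pow_eq_zero_iff (n := 2) (by norm_num) |>.mp this.symm)

-- q-side and p-side divisibility facts
private lemma key_facts (p q : ℕ) (hp : p.Prime) (hq : q.Prime) (hpq : p ≠ q)
    (g h : ℤ[X]) (hf : FF p q = g * h) :
    (∀ i < g.natDegree, (q:ℤ) ∣ g.coeff i) ∧ (∀ i, 0 < i → (p:ℤ) ∣ g.coeff i) := by
  have hp0 : (p:ℤ) ≠ 0 := Int.natCast_ne_zero.mpr hp.ne_zero
  have hg0 : g ≠ 0 := fun hg => FF_ne_zero p q hp0 (by rw [hf, hg, zero_mul])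
  have hh0 : h ≠ 0 := fun hh => FF_ne_zero p q hp0 (by rw [hf, hh, mul_zero])
  have hsum : g.natDegree + h.natDegree = 6 := by
    rw [← natDegree_mul hg0 hh0, ← hf, FF_natDegree p q hp0]
  constructor
  · -- q-side
    haveI := Fact.mk hq
    set ρ : ℤ →+* ZMod q := Int.castRingHom (ZMod q) with hρ
    have hpq' : (p : ZMod q)^2 ≠ 0 := by
      have : ¬ (q ∣ p) := fun hd => hpq ((Nat.prime_dvd_prime_iff_eq hq hp).mp hd).symm
      have hne : (p : ZMod q) ≠ 0 := fun hc => this ((ZMod.natCast_eq_zero_iff p q).mp hc)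
      exact pow_ne_zero 2 hne
    have hmap : (FF p q).map ρ = C ((p:ZMod q)^2) * X^6 := by
      simp only [FF, Polynomial.map_add, Polynomial.map_mul, Polynomial.map_pow, map_C, map_X, hρ]
      simp [ZMod.natCast_self]
    have hmul : (g.map ρ) * (h.map ρ) = C ((p:ZMod q)^2) * X^6 := by
      rw [← Polynomial.map_mul, ← hf, hmap]
    have hrne : C ((p:ZMod q)^2) * X^6 ≠ 0 :=
      mul_ne_zero (C_ne_zero.mpr hpq') (pow_ne_zero _ X_ne_zero)
    have hgm : g.map ρ ≠ 0 := fun hc => hrne (by rw [← hmul, hc, zero_mul])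
    have hhm : h.map ρ ≠ 0 := fun hc => hrne (by rw [← hmul, hc, mul_zero])
    have hdeg : (g.map ρ).natDegree + (h.map ρ).natDegree = 6 := by
      rw [← natDegree_mul hgm hhm, hmul, natDegree_C_mul_X_pow 6 _ hpq']
    have htr : (g.map ρ).natTrailingDegree + (h.map ρ).natTrailingDegree = 6 := by
      rw [← natTrailingDegree_mul hgm hhm, hmul, C_mul_X_pow_eq_monomial,
        natTrailingDegree_monomial hpq']
    have l1 : (g.map ρ).natDegree ≤ g.natDegree := natDegree_map_le
    have l2 : (h.map ρ).natDegree ≤ h.natDegree := natDegree_map_le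
    have t1 : (g.map ρ).natTrailingDegree ≤ (g.map ρ).natDegree := natTrailingDegree_le_natDegree _
    have t2 : (h.map ρ).natTrailingDegree ≤ (h.map ρ).natDegree := natTrailingDegree_le_natDegree _
    have heq : g.natDegree ≤ (g.map ρ).natTrailingDegree := by omega
    intro i hi
    have : (g.map ρ).coeff i = 0 :=
      coeff_eq_zero_of_lt_natTrailingDegree (lt_of_lt_of_le hi heq)
    rw [coeff_map] at this
    exact (ZMod.intCast_zmod_eq_zero_iff_dvd _ q).mp this
  · -- p-side
    haveI := Fact.mk hp
    set ρ : ℤ →+* ZMod p := Int.castRingHom (ZMod p) with hρ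
    have hqp' : (q : ZMod p)^3 ≠ 0 := by
      have : ¬ (p ∣ q) := fun hd => hpq ((Nat.prime_dvd_prime_iff_eq hp hq).mp hd)
      have hne : (q : ZMod p) ≠ 0 := fun hc => this ((ZMod.natCast_eq_zero_iff q p).mp hc)
      exact pow_ne_zero 3 hne
    have hmap : (FF p q).map ρ = C ((q:ZMod p)^3) := by
      simp only [FF, Polynomial.map_add, Polynomial.map_mul, Polynomial.map_pow, map_C, map_X, hρ]
      simp [ZMod.natCast_self]
    have hmul : (g.map ρ) * (h.map ρ) = C ((q:ZMod p)^3) := by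
      rw [← Polynomial.map_mul, ← hf, hmap]
    have hrne : (C ((q:ZMod p)^3) : (ZMod p)[X]) ≠ 0 := C_ne_zero.mpr hqp'
    have hgm : g.map ρ ≠ 0 := fun hc => hrne (by rw [← hmul, hc, zero_mul])
    have hhm : h.map ρ ≠ 0 := fun hc => hrne (by rw [← hmul, hc, mul_zero])
    have hdeg : (g.map ρ).natDegree + (h.map ρ).natDegree = 0 := by
      rw [← natDegree_mul hgm hhm, hmul, natDegree_C]
    intro i hi
    have : (g.map ρ).coeff i = 0 :=
      coeff_eq_zero_of_natDegree_lt (by omega)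
    rw [coeff_map] at this
    exact (ZMod.intCast_zmod_eq_zero_iff_dvd _ p).mp this

private lemma q_not_dvd_p_sq (p q : ℕ) (hp : p.Prime) (hq : q.Prime) (hpq : p ≠ q) :
    ¬ (q:ℤ) ∣ (p:ℤ)^2 := by
  intro hd
  have hQ : Prime (q:ℤ) := Nat.prime_iff_prime_int.mp hq
  have : (q:ℤ) ∣ (p:ℤ) := hQ.dvd_of_dvd_pow hd
  have : q ∣ p := Int.ofNat_dvd.mp this
  exact hpq ((Nat.prime_dvd_prime_iff_eq hq hp).mp this).symm

-- case degree 3 / 3 with q^2 dividing g's constant coefficient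
private lemma case3 (p q : ℕ) (hp : p.Prime) (hq : q.Prime) (hpq : p ≠ q)
    (g h : ℤ[X]) (hf : FF p q = g * h)
    (hg3 : g.natDegree = 3) (hh3 : h.natDegree = 3) (hdq : (q:ℤ)^2 ∣ g.coeff 0) : False := by
  obtain ⟨qg, pg⟩ := key_facts p q hp hq hpq g h hf
  obtain ⟨qh, ph⟩ := key_facts p q hp hq hpq h g (by rw [hf, mul_comm])
  have hQ : Prime (q:ℤ) := Nat.prime_iff_prime_int.mp hq
  have csum : ∀ k, (FF (p:ℤ) (q:ℤ)).coeff k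
      = ∑ i ∈ Finset.range (k+1), g.coeff i * h.coeff (k-i) := fun k => by
    rw [hf, coeff_mul, Finset.Nat.sum_antidiagonal_eq_sum_range_succ_mk]
  have e0 : g.coeff 0 * h.coeff 0 = (q:ℤ)^3 := by
    have h' := csum 0
    rw [FF_coeff_zero] at h'
    simpa [Finset.sum_range_succ] using h'.symm
  have e1 : g.coeff 0 * h.coeff 1 + g.coeff 1 * h.coeff 0 = (p:ℤ)^2*(q:ℤ)^3 := by
    have h' := csum 1
    rw [FF_coeff_mid _ _ 1 (by norm_num) (by norm_num)] at h'
    simp [Finset.sum_range_succ] at h'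
    linarith
  have e2 : g.coeff 0 * h.coeff 2 + g.coeff 1 * h.coeff 1 + g.coeff 2 * h.coeff 0
      = (p:ℤ)^2*(q:ℤ)^3 := by
    have h' := csum 2
    rw [FF_coeff_mid _ _ 2 (by norm_num) (by norm_num)] at h'
    simp [Finset.sum_range_succ] at h'
    linarith
  have e3 : g.coeff 0 * h.coeff 3 + g.coeff 1 * h.coeff 2 + g.coeff 2 * h.coeff 1
      + g.coeff 3 * h.coeff 0 = (p:ℤ)^2*(q:ℤ)^3 := by
    have h' := csum 3
    rw [FF_coeff_mid _ _ 3 (by norm_num) (by norm_num)] at h'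
    simp [Finset.sum_range_succ] at h'
    linarith
  have e6 : g.coeff 3 * h.coeff 3 = (p:ℤ)^2 := by
    have h6 := FF_coeff_six (p:ℤ) (q:ℤ)
    rw [hf] at h6
    have : g.natDegree + h.natDegree = 6 := by omega
    rw [← this, coeff_mul_degree_add_degree] at h6
    simpa [leadingCoeff, hg3, hh3] using h6
  -- a3 not divisible by q
  have ha3 : ¬ (q:ℤ) ∣ g.coeff 3 := fun hd =>
    q_not_dvd_p_sq p q hp hq hpq (e6 ▸ hd.mul_right _)
  obtain ⟨u, hu⟩ := hdq
  obtain ⟨v, hv⟩ := qh 0 (by omega)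
  have huv : u * v = 1 := by
    have h3 : (q:ℤ)^3 * (u*v) = (q:ℤ)^3 * 1 := by
      rw [mul_one]
      calc (q:ℤ)^3 * (u*v) = ((q:ℤ)^2*u) * ((q:ℤ)*v) := by ring
        _ = g.coeff 0 * h.coeff 0 := by rw [hu, hv]
        _ = (q:ℤ)^3 := e0
    exact mul_left_cancel₀ (pow_ne_zero _ hQ.ne_zero) h3
  have hvu : v = 1 ∨ v = -1 :=
    Int.isUnit_iff.mp (IsUnit.of_mul_eq_one (a := v) u (by rw [mul_comm]; exact huv))
  obtain ⟨β1, hβ1⟩ := qh 1 (by omega)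
  obtain ⟨β2, hβ2⟩ := qh 2 (by omega)
  -- step 1 : q^2 ∣ a1
  have d1 : (q:ℤ)^3 ∣ g.coeff 1 * h.coeff 0 := by
    have hx : g.coeff 1 * h.coeff 0 = (p:ℤ)^2*(q:ℤ)^3 - g.coeff 0 * h.coeff 1 := by linarith
    rw [hx]
    exact dvd_sub (dvd_mul_left _ _) ⟨u * β1, by rw [hu, hβ1]; ring⟩
  have d1' : (q:ℤ)^2 ∣ g.coeff 1 := by
    apply dvd_of_dvd_mul_unit hvu
    apply pow_cancel hQ.ne_zero
    have : g.coeff 1 * h.coeff 0 = (q:ℤ) * (g.coeff 1 * v) := by rw [hv]; ring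
    rwa [this] at d1
  -- step 2 : q^2 ∣ a2
  obtain ⟨α1, hα1⟩ := d1'
  have d2 : (q:ℤ)^3 ∣ g.coeff 2 * h.coeff 0 := by
    have hx : g.coeff 2 * h.coeff 0
        = (p:ℤ)^2*(q:ℤ)^3 - g.coeff 0 * h.coeff 2 - g.coeff 1 * h.coeff 1 := by linarith
    rw [hx]
    exact dvd_sub (dvd_sub (dvd_mul_left _ _) ⟨u * β2, by rw [hu, hβ2]; ring⟩)
      ⟨α1 * β1, by rw [hα1, hβ1]; ring⟩
  have d2' : (q:ℤ)^2 ∣ g.coeff 2 := by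
    apply dvd_of_dvd_mul_unit hvu
    apply pow_cancel hQ.ne_zero
    have : g.coeff 2 * h.coeff 0 = (q:ℤ) * (g.coeff 2 * v) := by rw [hv]; ring
    rwa [this] at d2
  -- step 3 : q ∣ a3, contradiction
  obtain ⟨α2, hα2⟩ := d2'
  have d3 : (q:ℤ)^2 ∣ g.coeff 3 * h.coeff 0 := by
    have hx : g.coeff 3 * h.coeff 0 = (p:ℤ)^2*(q:ℤ)^3 - g.coeff 0 * h.coeff 3
        - g.coeff 1 * h.coeff 2 - g.coeff 2 * h.coeff 1 := by linarith
    rw [hx]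
    refine dvd_sub (dvd_sub (dvd_sub ⟨(p:ℤ)^2*(q:ℤ), by ring⟩
      ⟨u * h.coeff 3, by rw [hu]; ring⟩) ⟨α1 * h.coeff 2, by rw [hα1]; ring⟩)
      ⟨α2 * h.coeff 1, by rw [hα2]; ring⟩
  have d3' : (q:ℤ) ∣ g.coeff 3 := by
    have h' : (q:ℤ)^1 ∣ g.coeff 3 * v := by
      apply pow_cancel hQ.ne_zero
      have hx : g.coeff 3 * h.coeff 0 = (q:ℤ) * (g.coeff 3 * v) := by rw [hv]; ring
      rwa [hx] at d3
    simpa using dvd_of_dvd_mul_unit hvu h'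
  exact ha3 d3'

private lemma pow_cancel2 {q x : ℤ} (hq : q ≠ 0) {k m n : ℕ} (hn : n = k + m)
    (h : q^n ∣ q^m * x) : q^k ∣ x := by
  subst hn
  obtain ⟨c, hc⟩ := h
  exact ⟨c, mul_left_cancel₀ (pow_ne_zero m hq) (by rw [hc, pow_add]; ring)⟩

private lemma no_small (p q : ℕ) (hp : p.Prime) (hq : q.Prime) (hpq : p ≠ q)
    (g h : ℤ[X]) (hf : FF p q = g * h)
    (h1 : 1 ≤ g.natDegree) (hle : g.natDegree ≤ h.natDegree) : False := by
  have hp0 : (p:ℤ) ≠ 0 := Int.natCast_ne_zero.mpr hp.ne_zero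
  have hQ : Prime (q:ℤ) := Nat.prime_iff_prime_int.mp hq
  have hP : Prime (p:ℤ) := Nat.prime_iff_prime_int.mp hp
  have hg0 : g ≠ 0 := fun hg => FF_ne_zero p q hp0 (by rw [hf, hg, zero_mul])
  have hh0 : h ≠ 0 := fun hh => FF_ne_zero p q hp0 (by rw [hf, hh, mul_zero])
  have hsum : g.natDegree + h.natDegree = 6 := by
    rw [← natDegree_mul hg0 hh0, ← hf, FF_natDegree p q hp0]
  obtain ⟨qg, pg⟩ := key_facts p q hp hq hpq g h hf
  obtain ⟨qh, ph⟩ := key_facts p q hp hq hpq h g (by rw [hf, mul_comm])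
  have csum : ∀ k, (FF (p:ℤ) (q:ℤ)).coeff k
      = ∑ i ∈ Finset.range (k+1), g.coeff i * h.coeff (k-i) := fun k => by
    rw [hf, coeff_mul, Finset.Nat.sum_antidiagonal_eq_sum_range_succ_mk]
  have e0 : g.coeff 0 * h.coeff 0 = (q:ℤ)^3 := by
    have h' := csum 0; rw [FF_coeff_zero] at h'
    simpa [Finset.sum_range_succ] using h'.symm
  have e6 : g.coeff g.natDegree * h.coeff h.natDegree = (p:ℤ)^2 := by
    have h6 := FF_coeff_six (p:ℤ) (q:ℤ)
    rw [hf, ← hsum, coeff_mul_degree_add_degree] at h6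
    exact h6
  have hpa0 : ¬ (p:ℤ) ∣ g.coeff 0 := by
    intro hd
    have h2 : (p:ℤ) ∣ (q:ℤ)^3 := e0 ▸ hd.mul_right _
    have h3 : (p:ℤ) ∣ (q:ℤ) := hP.dvd_of_dvd_pow h2
    exact hpq ((Nat.prime_dvd_prime_iff_eq hp hq).mp (Int.ofNat_dvd.mp h3))
  have hqlead : ¬ (q:ℤ) ∣ g.coeff g.natDegree := fun hd =>
    q_not_dvd_p_sq p q hp hq hpq (e6 ▸ hd.mul_right _)
  have hd3 : g.natDegree = 1 ∨ g.natDegree = 2 ∨ g.natDegree = 3 := by omega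
  rcases hd3 with hdg | hdg | hdg
  · -- degree 1
    have hqa1 : ¬ (q:ℤ) ∣ g.coeff 1 := by rw [hdg] at hqlead; exact hqlead
    have e1 : g.coeff 0 * h.coeff 1 + g.coeff 1 * h.coeff 0 = (p:ℤ)^2*(q:ℤ)^3 := by
      have h' := csum 1
      rw [FF_coeff_mid _ _ 1 (by norm_num) (by norm_num)] at h'
      simp [Finset.sum_range_succ] at h'; linarith
    have e2 : g.coeff 0 * h.coeff 2 + g.coeff 1 * h.coeff 1 = (p:ℤ)^2*(q:ℤ)^3 := by
      have h' := csum 2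
      rw [FF_coeff_mid _ _ 2 (by norm_num) (by norm_num)] at h'
      have hz : g.coeff 2 = 0 := coeff_eq_zero_of_natDegree_lt (by omega)
      simp [Finset.sum_range_succ, hz] at h'; linarith
    obtain ⟨a', ha'⟩ := qg 0 (by omega)
    obtain ⟨b', hb'⟩ := qh 0 (by omega)
    have hab : a' * b' = (q:ℤ) := by
      have h3 : (q:ℤ)^2 * (a'*b') = (q:ℤ)^2 * (q:ℤ) := by
        calc (q:ℤ)^2*(a'*b') = ((q:ℤ)*a')*((q:ℤ)*b') := by ring
          _ = g.coeff 0 * h.coeff 0 := by rw [ha', hb']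
          _ = (q:ℤ)^3 := e0
          _ = (q:ℤ)^2*(q:ℤ) := by ring
      exact mul_left_cancel₀ (pow_ne_zero _ hQ.ne_zero) h3
    obtain ⟨β1, hβ1⟩ := qh 1 (by omega)
    rcases hQ.dvd_mul.mp (dvd_of_eq hab.symm) with hqa | hqb
    · -- q^2 ∣ a0
      obtain ⟨u, hu2⟩ := hqa
      have hub : u * b' = 1 := by
        have h3 : (q:ℤ) * (u*b') = (q:ℤ) * 1 := by
          rw [mul_one]
          calc (q:ℤ)*(u*b') = ((q:ℤ)*u)*b' := by ring
            _ = a' * b' := by rw [hu2]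
            _ = (q:ℤ) := hab
        exact mul_left_cancel₀ hQ.ne_zero h3
      have hbu : b' = 1 ∨ b' = -1 :=
        Int.isUnit_iff.mp (IsUnit.of_mul_eq_one (a := b') u (by rw [mul_comm]; exact hub))
      have d1 : (q:ℤ)^3 ∣ g.coeff 1 * h.coeff 0 := by
        have hx : g.coeff 1 * h.coeff 0 = (p:ℤ)^2*(q:ℤ)^3 - g.coeff 0 * h.coeff 1 := by linarith
        rw [hx]
        exact dvd_sub (dvd_mul_left _ _) ⟨u * β1, by rw [ha', hu2, hβ1]; ring⟩
      have d1' : (q:ℤ)^2 ∣ g.coeff 1 := by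
        apply dvd_of_dvd_mul_unit hbu
        apply pow_cancel2 hQ.ne_zero (m := 1) (n := 3) (by norm_num)
        have hx : g.coeff 1 * h.coeff 0 = (q:ℤ)^1 * (g.coeff 1 * b') := by rw [hb']; ring
        rwa [hx] at d1
      exact hqa1 ((dvd_pow_self (q:ℤ) two_ne_zero).trans d1')
    · -- q^2 ∣ b0
      obtain ⟨w, hw⟩ := hqb
      have haw : a' * w = 1 := by
        have h3 : (q:ℤ) * (a'*w) = (q:ℤ) * 1 := by
          rw [mul_one]
          calc (q:ℤ)*(a'*w) = a'*((q:ℤ)*w) := by ring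
            _ = a' * b' := by rw [hw]
            _ = (q:ℤ) := hab
        exact mul_left_cancel₀ hQ.ne_zero h3
      have hau : w = 1 ∨ w = -1 :=
        Int.isUnit_iff.mp (IsUnit.of_mul_eq_one (a := w) a' (by rw [mul_comm]; exact haw))
      obtain ⟨β2, hβ2⟩ := qh 2 (by omega)
      have d2 : (q:ℤ)^2 ∣ g.coeff 1 * h.coeff 1 := by
        have hx : g.coeff 1 * h.coeff 1 = (p:ℤ)^2*(q:ℤ)^3 - g.coeff 0 * h.coeff 2 := by linarith
        rw [hx]
        exact dvd_sub ⟨(p:ℤ)^2*(q:ℤ), by ring⟩ ⟨a' * β2, by rw [ha', hβ2]; ring⟩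
      have s1 : (q:ℤ)^1 ∣ g.coeff 1 * β1 := by
        apply pow_cancel2 hQ.ne_zero (m := 1) (n := 2) (by norm_num)
        have hx : g.coeff 1 * h.coeff 1 = (q:ℤ)^1 * (g.coeff 1 * β1) := by rw [hβ1]; ring
        rwa [hx] at d2
      have s2 : (q:ℤ) ∣ β1 := by
        rw [pow_one] at s1
        exact (hQ.dvd_mul.mp s1).resolve_left hqa1
      obtain ⟨c, hc⟩ := s2
      have d1 : (q:ℤ)^3 ∣ g.coeff 1 * h.coeff 0 := by
        have hx : g.coeff 1 * h.coeff 0 = (p:ℤ)^2*(q:ℤ)^3 - g.coeff 0 * h.coeff 1 := by linarith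
        rw [hx]
        exact dvd_sub (dvd_mul_left _ _) ⟨a' * c, by rw [ha', hβ1, hc]; ring⟩
      have s3 : (q:ℤ)^1 ∣ g.coeff 1 * w := by
        apply pow_cancel2 hQ.ne_zero (m := 2) (n := 3) (by norm_num)
        have hx : g.coeff 1 * h.coeff 0 = (q:ℤ)^2 * (g.coeff 1 * w) := by rw [hb', hw]; ring
        rwa [hx] at d1
      have : (q:ℤ) ∣ g.coeff 1 := by simpa using dvd_of_dvd_mul_unit hau s3
      exact hqa1 this
  · -- degree 2
    have hdh : h.natDegree = 4 := by omega
    have e4 : g.coeff 0 * h.coeff 4 + g.coeff 1 * h.coeff 3 + g.coeff 2 * h.coeff 2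
        = (p:ℤ)^2*(q:ℤ)^3 := by
      have h' := csum 4
      rw [FF_coeff_mid _ _ 4 (by norm_num) (by norm_num)] at h'
      have hz3 : g.coeff 3 = 0 := coeff_eq_zero_of_natDegree_lt (by omega)
      have hz4 : g.coeff 4 = 0 := coeff_eq_zero_of_natDegree_lt (by omega)
      simp [Finset.sum_range_succ, hz3, hz4] at h'; linarith
    have e6' : g.coeff 2 * h.coeff 4 = (p:ℤ)^2 := by rw [hdg, hdh] at e6; exact e6
    obtain ⟨a2', ha2⟩ := pg 2 (by norm_num)
    obtain ⟨b4', hb4⟩ := ph 4 (by norm_num)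
    have hab : a2' * b4' = 1 := by
      have h3 : (p:ℤ)^2 * (a2'*b4') = (p:ℤ)^2 * 1 := by
        rw [mul_one]
        calc (p:ℤ)^2*(a2'*b4') = ((p:ℤ)*a2')*((p:ℤ)*b4') := by ring
          _ = g.coeff 2 * h.coeff 4 := by rw [ha2, hb4]
          _ = (p:ℤ)^2 := e6'
      exact mul_left_cancel₀ (pow_ne_zero _ hP.ne_zero) h3
    have hbu : b4' = 1 ∨ b4' = -1 :=
      Int.isUnit_iff.mp (IsUnit.of_mul_eq_one (a := b4') a2' (by rw [mul_comm]; exact hab))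
    obtain ⟨α1, hα1⟩ := pg 1 (by norm_num)
    obtain ⟨γ3, hγ3⟩ := ph 3 (by norm_num)
    obtain ⟨γ2, hγ2⟩ := ph 2 (by norm_num)
    have d : (p:ℤ)^2 ∣ g.coeff 0 * h.coeff 4 := by
      have hx : g.coeff 0 * h.coeff 4
          = (p:ℤ)^2*(q:ℤ)^3 - g.coeff 1*h.coeff 3 - g.coeff 2*h.coeff 2 := by linarith
      rw [hx]
      exact dvd_sub (dvd_sub ⟨(q:ℤ)^3, by ring⟩ ⟨α1*γ3, by rw [hα1, hγ3]; ring⟩)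
        ⟨a2'*γ2, by rw [ha2, hγ2]; ring⟩
    have : (p:ℤ) ∣ g.coeff 0 := by
      have s1 : (p:ℤ)^1 ∣ g.coeff 0 * b4' := by
        apply pow_cancel2 hP.ne_zero (m := 1) (n := 2) (by norm_num)
        have hx : g.coeff 0 * h.coeff 4 = (p:ℤ)^1 * (g.coeff 0 * b4') := by rw [hb4]; ring
        rwa [hx] at d
      simpa using dvd_of_dvd_mul_unit hbu s1
    exact hpa0 this
  · -- degree 3
    have hdh : h.natDegree = 3 := by omega
    obtain ⟨a', ha'⟩ := qg 0 (by omega)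
    obtain ⟨b', hb'⟩ := qh 0 (by omega)
    have hab : a' * b' = (q:ℤ) := by
      have h3 : (q:ℤ)^2 * (a'*b') = (q:ℤ)^2 * (q:ℤ) := by
        calc (q:ℤ)^2*(a'*b') = ((q:ℤ)*a')*((q:ℤ)*b') := by ring
          _ = g.coeff 0 * h.coeff 0 := by rw [ha', hb']
          _ = (q:ℤ)^3 := e0
          _ = (q:ℤ)^2*(q:ℤ) := by ring
      exact mul_left_cancel₀ (pow_ne_zero _ hQ.ne_zero) h3
    rcases hQ.dvd_mul.mp (dvd_of_eq hab.symm) with hqa | hqb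
    · exact case3 p q hp hq hpq g h hf hdg hdh
        (by obtain ⟨u, hu⟩ := hqa; exact ⟨u, by rw [ha', hu]; ring⟩)
    · exact case3 p q hp hq hpq h g (by rw [hf, mul_comm]) hdh hdg
        (by obtain ⟨w, hw⟩ := hqb; exact ⟨w, by rw [hb', hw]; ring⟩)

private lemma FF_primitive (p q : ℕ) (hp : p.Prime) (hq : q.Prime) (hpq : p ≠ q) :
    (FF (p:ℤ) (q:ℤ)).IsPrimitive := by
  intro r hr
  have hco := (C_dvd_iff_dvd_coeff r (FF (p:ℤ) (q:ℤ))).mp hr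
  have h0 : r ∣ (q:ℤ)^3 := by have := hco 0; rwa [FF_coeff_zero] at this
  have h6 : r ∣ (p:ℤ)^2 := by have := hco 6; rwa [FF_coeff_six] at this
  have hcop : IsCoprime ((q:ℤ)^3) ((p:ℤ)^2) := by
    have h : IsCoprime (q:ℤ) (p:ℤ) := by
      rw [Int.isCoprime_iff_gcd_eq_one]
      simpa using (Nat.coprime_primes hq hp).mpr (Ne.symm hpq)
    exact h.pow
  exact hcop.isUnit_of_dvd' h0 h6

private lemma FF_irreducible (p q : ℕ) (hp : p.Prime) (hq : q.Prime) (hpq : p ≠ q) :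
    Irreducible (FF (p:ℤ) (q:ℤ)) := by
  have hp0 : (p:ℤ) ≠ 0 := Int.natCast_ne_zero.mpr hp.ne_zero
  have hprim := FF_primitive p q hp hq hpq
  constructor
  · intro hu
    have h6 := natDegree_eq_zero_of_isUnit hu
    rw [FF_natDegree _ _ hp0] at h6
    norm_num at h6
  · intro g h hf
    by_contra hc
    push_neg at hc
    obtain ⟨hcg, hch⟩ := hc
    have hg0 : g ≠ 0 := fun hg => FF_ne_zero _ _ hp0 (by rw [hf, hg, zero_mul])
    have hh0 : h ≠ 0 := fun hh => FF_ne_zero _ _ hp0 (by rw [hf, hh, mul_zero])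
    have hdg : g.natDegree ≠ 0 := by
      intro h0
      have hgC : g = C (g.coeff 0) := eq_C_of_natDegree_eq_zero h0
      exact hcg (hgC ▸ isUnit_C.mpr (hprim (g.coeff 0) ⟨h, by rw [← hgC, hf]⟩))
    have hdh : h.natDegree ≠ 0 := by
      intro h0
      have hhC : h = C (h.coeff 0) := eq_C_of_natDegree_eq_zero h0
      exact hch (hhC ▸ isUnit_C.mpr (hprim (h.coeff 0) ⟨g, by rw [← hhC, hf, mul_comm]⟩))
    rcases le_total g.natDegree h.natDegree with hle | hle
    · exact no_small p q hp hq hpq g h hf (by omega) hle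
    · exact no_small p q hp hq hpq h g (by rw [hf, mul_comm]) (by omega) hle

theorem example_1 (p q : ℕ) (hp : p.Prime) (hq : q.Prime) (hpq : p ≠ q) :
    Irreducible (((C ((q:ℤ)^3) + C ((p:ℤ)^2 * (q:ℤ)^3) * X + C ((p:ℤ)^2 * (q:ℤ)^3) * X^2 +
      C ((p:ℤ)^2 * (q:ℤ)^3) * X^3 + C ((p:ℤ)^2 * (q:ℤ)^3) * X^4 +
      C ((p:ℤ)^2 * (q:ℤ)^3) * X^5 + C ((p:ℤ)^2) * X^6)).map (Int.castRingHom ℚ)) := by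
  have hprim := FF_primitive p q hp hq hpq
  have hirr := FF_irreducible p q hp hq hpq
  have h := (hprim.irreducible_iff_irreducible_map_fraction_map (K := ℚ)).mp hirr
  rw [algebraMap_int_eq] at h
  exact h
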